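/- If the bias sequence satisfies f(n) = a/n + b/n² + O(1/n³) as n → ∞, then n·f(n) − (n−1)·f(n−1) = O(1/n²) as n → ∞; that is, the bias of the jackknife bias-corrected estimate θ̂ᴶ_n = n·θ̂_n − (n−1)·θ̄ᴶ_n is of order O(1/n²), an order of magnitude smaller than the O(1/n) bias of θ̂_n. -/

import Mathlib

open Filter Asymptotics

theorem stmt10 (a b : ℝ) (f : ℕ → ℝ)
    (hf : (fun n : ℕ => f n - (a / (n : ℝ) + b / (n : ℝ) ^ 2))
        =O[atTop] fun n : ℕ => 1 / (n : ℝ) ^ 3) :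
    (fun n : ℕ => (n : ℝ) * f n - ((n : ℝ) - 1) * f (n - 1))
      =O[atTop] fun n : ℕ => 1 / (n : ℝ) ^ 2 := by
  obtain ⟨C, hC⟩ := hf.bound
  obtain ⟨N, hN⟩ := eventually_atTop.mp hC
  apply IsBigO.of_bound (5 * |C| + 2 * |b|)
  filter_upwards [eventually_atTop.mpr ⟨N + 2, fun n hn => hn⟩] with n hn
  have h2 : 2 ≤ n := le_trans (by omega) hn
  set x : ℝ := (n : ℝ) with hx
  have hx2 : (2 : ℝ) ≤ x := by rw [hx]; exact_mod_cast h2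
  have hx0 : (0 : ℝ) < x := by linarith
  have hx1 : (0 : ℝ) < x - 1 := by linarith
  have hm : ((n - 1 : ℕ) : ℝ) = x - 1 := by
    rw [hx]
    have : 1 ≤ n := by omega
    push_cast [this]; ring
  set g : ℕ → ℝ := fun k => f k - (a / (k : ℝ) + b / (k : ℝ) ^ 2) with hg
  clear_value x
  clear_value g
  clear hf hC
  have hgn : |g n| ≤ |C| / x ^ 3 := by
    have h := hN n (by omega)
    rw [Real.norm_eq_abs, Real.norm_eq_abs, ← hx,
      abs_of_pos (by positivity : (0:ℝ) < 1 / x ^ 3)] at h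
    calc |g n| ≤ C * (1 / x ^ 3) := by simpa [hg, ← hx] using h
      _ ≤ |C| * (1 / x ^ 3) :=
          mul_le_mul_of_nonneg_right (le_abs_self C) (by positivity)
      _ = |C| / x ^ 3 := by ring
  have hgm : |g (n - 1)| ≤ |C| / (x - 1) ^ 3 := by
    have h := hN (n - 1) (by omega)
    rw [Real.norm_eq_abs, Real.norm_eq_abs, hm,
      abs_of_pos (by positivity : (0:ℝ) < 1 / (x - 1) ^ 3)] at h
    calc |g (n - 1)| ≤ C * (1 / (x - 1) ^ 3) := by simpa [hg, hm] using h
      _ ≤ |C| * (1 / (x - 1) ^ 3) :=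
          mul_le_mul_of_nonneg_right (le_abs_self C) (by positivity)
      _ = |C| / (x - 1) ^ 3 := by ring
  have hfn : f n = g n + (a / x + b / x ^ 2) := by simp [hg, ← hx]
  have hfm : f (n - 1) = g (n - 1) + (a / (x - 1) + b / (x - 1) ^ 2) := by
    simp [hg, hm]
  rw [Real.norm_eq_abs, Real.norm_eq_abs, hfn, hfm]
  have hxne : x ≠ 0 := ne_of_gt hx0
  have hx1ne : x - 1 ≠ 0 := ne_of_gt hx1
  have key : x * (g n + (a / x + b / x ^ 2)) - (x - 1) * (g (n - 1) + (a / (x - 1) + b / (x - 1) ^ 2))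
      = x * g n - (x - 1) * g (n - 1) + (b / x - b / (x - 1)) := by
    field_simp
    ring
  rw [key, abs_of_pos (by positivity : (0:ℝ) < 1 / x ^ 2)]
  have h1 : |x * g n| ≤ |C| / x ^ 2 := by
    rw [abs_mul, abs_of_pos hx0]
    calc x * |g n| ≤ x * (|C| / x ^ 3) := by nlinarith
      _ = |C| / x ^ 2 := by field_simp
  have h2' : |(x - 1) * g (n - 1)| ≤ 4 * |C| / x ^ 2 := by
    rw [abs_mul, abs_of_pos hx1]
    calc (x - 1) * |g (n - 1)| ≤ (x - 1) * (|C| / (x - 1) ^ 3) := by nlinarith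
      _ = |C| / (x - 1) ^ 2 := by field_simp
      _ ≤ 4 * |C| / x ^ 2 := by
          rw [div_le_div_iff₀ (by positivity) (by positivity)]
          nlinarith [abs_nonneg C, mul_nonneg (show (0:ℝ) ≤ 3*x-2 by linarith) (show (0:ℝ) ≤ x-2 by linarith)]
  have h3 : |b / x - b / (x - 1)| ≤ 2 * |b| / x ^ 2 := by
    have e : b / x - b / (x - 1) = -b / (x * (x - 1)) := by field_simp; ring
    rw [e, abs_div, abs_neg, abs_of_pos (by positivity : (0:ℝ) < x * (x - 1))]
    rw [div_le_div_iff₀ (by positivity) (by positivity)]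
    have hint : 0 ≤ |b| * (x * (x - 2)) :=
      mul_nonneg (abs_nonneg b) (mul_nonneg hx0.le (by linarith))
    nlinarith [hint]
  calc |x * g n - (x - 1) * g (n - 1) + (b / x - b / (x - 1))|
      ≤ |x * g n - (x - 1) * g (n - 1)| + |b / x - b / (x - 1)| := abs_add_le _ _
    _ ≤ |x * g n| + |(x - 1) * g (n - 1)| + |b / x - b / (x - 1)| := by
        have := abs_sub (x * g n) ((x - 1) * g (n - 1))
        linarith
    _ ≤ |C| / x ^ 2 + 4 * |C| / x ^ 2 + 2 * |b| / x ^ 2 := by linarith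
    _ = (5 * |C| + 2 * |b|) * (1 / x ^ 2) := by ring
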